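/- Let f and g be discrete probability distributions on the real line with cumulative distribution functions F and G. For the ground cost c(x,y) = |x-y|, the optimal transportation cost (Monge-Kantorovich cost) between f and g equals the L^1 norm of F - G, i.e., MK_c(f,g) = ∫_ℝ |F(t) - G(t)| dt. -/

import Mathlib

open Finset MeasureTheory

namespace MKaux

lemma clamp_piece (a b c d : ℝ) (hab : a ≤ b) (hcd : c ≤ d) :
    max 0 (min b d - max a c) = max a (min b d) - max a (min b c) := by
  rcases le_total b d with h1 | h1 <;> rcases le_total b c with h2 | h2 <;>
    rcases le_total a c with h3 | h3 <;> rcases le_total a d with h4 | h4 <;>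
      simp [max_def, min_def, *] <;> first | rfl | linarith | (split_ifs <;> linarith)

def cum {N : ℕ} (f : Fin N → ℝ) : ℕ → ℝ :=
  fun n => ∑ k ∈ Finset.range n, if h : k < N then f ⟨k, h⟩ else 0

lemma cum_zero {N : ℕ} (f : Fin N → ℝ) : cum f 0 = 0 := by simp [cum]

lemma cum_succ {N : ℕ} (f : Fin N → ℝ) (i : Fin N) :
    cum f ((i : ℕ) + 1) = cum f i + f i := by
  simp [cum, Finset.sum_range_succ, i.isLt]

lemma cum_mono {N : ℕ} {f : Fin N → ℝ} (hf : ∀ i, 0 ≤ f i) : Monotone (cum f) := by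
  apply monotone_nat_of_le_succ
  intro n
  rw [cum, cum, Finset.sum_range_succ]
  have h : (0:ℝ) ≤ if h : n < N then f ⟨n, h⟩ else 0 := by
    split_ifs with h
    · exact hf _
    · exact le_rfl
  linarith

lemma cum_top {N : ℕ} (f : Fin N → ℝ) : cum f N = ∑ i, f i := by
  rw [cum, ← Fin.sum_univ_eq_sum_range (fun k => if h : k < N then f ⟨k, h⟩ else 0) N]
  exact Finset.sum_congr rfl fun i _ => by simp [i.isLt]

lemma abs_ind (a b : ℝ) :
    (fun t : ℝ => |(if a < t then (1:ℝ) else 0) - (if b < t then 1 else 0)|) =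
      (Set.Ioc (min a b) (max a b)).indicator (fun _ => (1:ℝ)) := by
  funext t
  by_cases h1 : a < t <;> by_cases h2 : b < t <;>
    simp [Set.indicator_apply, Set.mem_Ioc, min_lt_iff, le_max_iff, h1, h2] <;>
    first
      | rw [if_pos (Or.inr (le_of_not_lt h2))]
      | rw [if_pos (Or.inl (le_of_not_lt h1))]

lemma integrable_ind (a b : ℝ) :
    Integrable (fun t : ℝ => |(if a < t then (1:ℝ) else 0) - (if b < t then 1 else 0)|) := by
  rw [abs_ind]
  exact (integrable_indicator_iff measurableSet_Ioc).2
    (integrableOn_const measure_Ioc_lt_top.ne)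

lemma integral_ind (a b : ℝ) :
    ∫ t : ℝ, |(if a < t then (1:ℝ) else 0) - (if b < t then 1 else 0)| = |a - b| := by
  rw [abs_ind, integral_indicator_const _ measurableSet_Ioc, Real.volume_real_Ioc,
    max_eq_left (by simp [min_le_max]), smul_eq_mul, mul_one,
    max_sub_min_eq_abs, abs_sub_comm]

end MKaux

namespace MKaux

lemma abs_eq_pp (r : ℝ) : |r| = max 0 r + max 0 (-r) := by
  rcases le_total 0 r with h | h
  · rw [abs_of_nonneg h, max_eq_right h, max_eq_left (by linarith)]; ring
  · rw [abs_of_nonpos h, max_eq_left h, max_eq_right (by linarith)]; ring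

lemma self_eq_pp (r : ℝ) : r = max 0 r - max 0 (-r) := by
  rcases le_total 0 r with h | h
  · rw [max_eq_right h, max_eq_left (by linarith)]; ring
  · rw [max_eq_left h, max_eq_right (by linarith)]; ring

variable {N M : ℕ}

def plan (f : Fin N → ℝ) (g : Fin M → ℝ) (i : Fin N) (j : Fin M) : ℝ :=
  max 0 (min (cum f ((i:ℕ)+1)) (cum g ((j:ℕ)+1)) - max (cum f i) (cum g j))

lemma plan_nonneg (f : Fin N → ℝ) (g : Fin M → ℝ) (i : Fin N) (j : Fin M) :
    0 ≤ plan f g i j := le_max_left _ _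

lemma plan_row (f : Fin N → ℝ) (g : Fin M → ℝ)
    (hf : ∀ i, 0 ≤ f i) (hg : ∀ j, 0 ≤ g j)
    (hf1 : ∑ i, f i = 1) (hg1 : ∑ j, g j = 1) (i : Fin N) :
    ∑ j, plan f g i j = f i := by
  set a := cum f i with ha
  set b := cum f ((i:ℕ)+1) with hb
  have hab : a ≤ b := by rw [ha, hb, cum_succ]; linarith [hf i]
  have key : ∀ j : Fin M, plan f g i j =
      max a (min b (cum g ((j:ℕ)+1))) - max a (min b (cum g j)) := by
    intro j
    rw [plan, clamp_piece a b _ _ hab (cum_mono hg (Nat.le_succ _))]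
  rw [Finset.sum_congr rfl fun j _ => key j]
  rw [Fin.sum_univ_eq_sum_range
    (fun k => max a (min b (cum g (k+1))) - max a (min b (cum g k))) M]
  rw [Finset.sum_range_sub (fun k => max a (min b (cum g k))) M]
  have h0 : cum g 0 = 0 := cum_zero g
  have hM : cum g M = 1 := by rw [cum_top, hg1]
  have ha0 : 0 ≤ a := by rw [ha]; simpa [cum_zero] using cum_mono hf (Nat.zero_le i)
  have hb1 : b ≤ 1 := by
    rw [hb, ← hf1, ← cum_top f]
    exact cum_mono hf i.isLt
  rw [h0, hM, min_eq_left hb1, min_eq_right (by linarith), max_eq_left ha0,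
    max_eq_right hab, hb, ha, cum_succ]
  ring

lemma plan_col (f : Fin N → ℝ) (g : Fin M → ℝ)
    (hf : ∀ i, 0 ≤ f i) (hg : ∀ j, 0 ≤ g j)
    (hf1 : ∑ i, f i = 1) (hg1 : ∑ j, g j = 1) (j : Fin M) :
    ∑ i, plan f g i j = g j := by
  set a := cum g j with ha
  set b := cum g ((j:ℕ)+1) with hb
  have hab : a ≤ b := by rw [ha, hb, cum_succ]; linarith [hg j]
  have key : ∀ i : Fin N, plan f g i j =
      max a (min b (cum f ((i:ℕ)+1))) - max a (min b (cum f i)) := by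
    intro i
    rw [plan, min_comm, max_comm (cum f (i:ℕ)),
      clamp_piece a b _ _ hab (cum_mono hf (Nat.le_succ _))]
  rw [Finset.sum_congr rfl fun i _ => key i]
  rw [Fin.sum_univ_eq_sum_range
    (fun k => max a (min b (cum f (k+1))) - max a (min b (cum f k))) N]
  rw [Finset.sum_range_sub (fun k => max a (min b (cum f k))) N]
  have h0 : cum f 0 = 0 := cum_zero f
  have hM : cum f N = 1 := by rw [cum_top, hf1]
  have ha0 : 0 ≤ a := by rw [ha]; simpa [cum_zero] using cum_mono hg (Nat.zero_le j)
  have hb1 : b ≤ 1 := by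
    rw [hb, ← hg1, ← cum_top g]
    exact cum_mono hg j.isLt
  rw [h0, hM, min_eq_left hb1, min_eq_right (by linarith), max_eq_left ha0,
    max_eq_right hab, hb, ha, cum_succ]
  ring

end MKaux

namespace MKaux

lemma no_cross {f : Fin N → ℝ} {g : Fin M → ℝ} {x : Fin N → ℝ} {y : Fin M → ℝ}
    (hf : ∀ i, 0 ≤ f i) (hg : ∀ j, 0 ≤ g j)
    (hx : Monotone x) (hy : Monotone y) {t : ℝ} {i i' : Fin N} {j j' : Fin M}
    (hij : 0 < plan f g i j) (hij' : 0 < plan f g i' j')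
    (h1 : x i < t) (h2 : ¬ y j < t) (h3 : y j' < t) (h4 : ¬ x i' < t) : False := by
  have hii : (i:ℕ) < i' := by
    by_contra h
    exact h4 (lt_of_le_of_lt (hx (by omega : i' ≤ i)) h1)
  have hjj : (j':ℕ) < j := by
    by_contra h
    exact h2 (lt_of_le_of_lt (hy (by omega : j ≤ j')) h3)
  have e1 : max (cum f i) (cum g j) < min (cum f ((i:ℕ)+1)) (cum g ((j:ℕ)+1)) := by
    by_contra h
    rw [plan, max_eq_left (by linarith [not_lt.mp h])] at hij
    exact lt_irrefl _ hij
  have e2 : max (cum f i') (cum g j') < min (cum f ((i':ℕ)+1)) (cum g ((j':ℕ)+1)) := by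
    by_contra h
    rw [plan, max_eq_left (by linarith [not_lt.mp h])] at hij'
    exact lt_irrefl _ hij'
  have c1 : cum g j < cum f ((i:ℕ)+1) :=
    lt_of_le_of_lt (le_max_right _ _) (lt_of_lt_of_le e1 (min_le_left _ _))
  have c2 : cum f i' < cum g ((j':ℕ)+1) :=
    lt_of_le_of_lt (le_max_left _ _) (lt_of_lt_of_le e2 (min_le_right _ _))
  have m1 : cum f ((i:ℕ)+1) ≤ cum f i' := cum_mono hf (by omega)
  have m2 : cum g ((j':ℕ)+1) ≤ cum g j := cum_mono hg (by omega)
  linarith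

end MKaux

namespace MKaux

lemma F_as_double {f : Fin N → ℝ} (x : Fin N → ℝ) (α : Fin N → Fin M → ℝ)
    (hrow : ∀ i, ∑ j, α i j = f i) (t : ℝ) :
    ∑ i, (if x i < t then f i else 0) =
      ∑ i, ∑ j, α i j * (if x i < t then (1:ℝ) else 0) := by
  refine Finset.sum_congr rfl fun i _ => ?_
  rw [← Finset.sum_mul, hrow]
  by_cases h : x i < t <;> simp [h]

lemma G_as_double {g : Fin M → ℝ} (y : Fin M → ℝ) (α : Fin N → Fin M → ℝ)
    (hcol : ∀ j, ∑ i, α i j = g j) (t : ℝ) :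
    ∑ j, (if y j < t then g j else 0) =
      ∑ i, ∑ j, α i j * (if y j < t then (1:ℝ) else 0) := by
  rw [Finset.sum_comm]
  refine Finset.sum_congr rfl fun j _ => ?_
  rw [← Finset.sum_mul, hcol]
  by_cases h : y j < t <;> simp [h]

lemma pointwise_le {f : Fin N → ℝ} {g : Fin M → ℝ} (x : Fin N → ℝ) (y : Fin M → ℝ)
    (α : Fin N → Fin M → ℝ) (hα : ∀ i j, 0 ≤ α i j)
    (hcol : ∀ j, ∑ i, α i j = g j) (hrow : ∀ i, ∑ j, α i j = f i) (t : ℝ) :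
    |(∑ i, if x i < t then f i else 0) - (∑ j, if y j < t then g j else 0)| ≤
      ∑ i, ∑ j, α i j * |(if x i < t then (1:ℝ) else 0) - (if y j < t then 1 else 0)| := by
  rw [F_as_double x α hrow t, G_as_double y α hcol t, ← Finset.sum_sub_distrib]
  calc |∑ i, (∑ j, α i j * (if x i < t then (1:ℝ) else 0) -
          ∑ j, α i j * (if y j < t then (1:ℝ) else 0))|
      ≤ ∑ i, |∑ j, α i j * (if x i < t then (1:ℝ) else 0) -
          ∑ j, α i j * (if y j < t then (1:ℝ) else 0)| := Finset.abs_sum_le_sum_abs _ _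
    _ ≤ ∑ i, ∑ j, α i j * |(if x i < t then (1:ℝ) else 0) - (if y j < t then 1 else 0)| := by
        refine Finset.sum_le_sum fun i _ => ?_
        rw [← Finset.sum_sub_distrib]
        refine le_trans (Finset.abs_sum_le_sum_abs _ _) (Finset.sum_le_sum fun j _ => ?_)
        rw [← mul_sub, abs_mul, abs_of_nonneg (hα i j)]

end MKaux

namespace MKaux

lemma max_ne_ind {P Q : Prop} [Decidable P] [Decidable Q]
    (h : max 0 ((if P then (1:ℝ) else 0) - (if Q then 1 else 0)) ≠ 0) : P ∧ ¬Q := by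
  by_cases h1 : P <;> by_cases h2 : Q <;> simp [h1, h2] at h ⊢

lemma pointwise_eq {f : Fin N → ℝ} {g : Fin M → ℝ} {x : Fin N → ℝ} {y : Fin M → ℝ}
    (hf : ∀ i, 0 ≤ f i) (hg : ∀ j, 0 ≤ g j)
    (hf1 : ∑ i, f i = 1) (hg1 : ∑ j, g j = 1)
    (hx : Monotone x) (hy : Monotone y) (t : ℝ) :
    ∑ i, ∑ j, plan f g i j * |(if x i < t then (1:ℝ) else 0) - (if y j < t then 1 else 0)| =
      |(∑ i, if x i < t then f i else 0) - (∑ j, if y j < t then g j else 0)| := by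
  set u : Fin N → ℝ := fun i => if x i < t then (1:ℝ) else 0 with hu
  set v : Fin M → ℝ := fun j => if y j < t then (1:ℝ) else 0 with hv
  set A := ∑ i, ∑ j, plan f g i j * max 0 (u i - v j) with hA
  set B := ∑ i, ∑ j, plan f g i j * max 0 (v j - u i) with hB
  have hS : ∑ i, ∑ j, plan f g i j * |u i - v j| = A + B := by
    rw [hA, hB, ← Finset.sum_add_distrib]
    refine Finset.sum_congr rfl fun i _ => ?_
    rw [← Finset.sum_add_distrib]
    refine Finset.sum_congr rfl fun j _ => ?_
    rw [← mul_add, abs_eq_pp, neg_sub]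
  have hD : (∑ i, if x i < t then f i else 0) - (∑ j, if y j < t then g j else 0)
      = A - B := by
    rw [F_as_double x _ (plan_row f g hf hg hf1 hg1) t,
      G_as_double y _ (plan_col f g hf hg hf1 hg1) t, hA, hB,
      ← Finset.sum_sub_distrib, ← Finset.sum_sub_distrib]
    refine Finset.sum_congr rfl fun i _ => ?_
    rw [← Finset.sum_sub_distrib, ← Finset.sum_sub_distrib]
    refine Finset.sum_congr rfl fun j _ => ?_
    rw [← mul_sub, ← mul_sub]
    congr 1
    have h := self_eq_pp (u i - v j)
    rwa [neg_sub] at h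
  have hA0 : 0 ≤ A := Finset.sum_nonneg fun i _ => Finset.sum_nonneg fun j _ =>
    mul_nonneg (plan_nonneg f g i j) (le_max_left _ _)
  have hB0 : 0 ≤ B := Finset.sum_nonneg fun i _ => Finset.sum_nonneg fun j _ =>
    mul_nonneg (plan_nonneg f g i j) (le_max_left _ _)
  have hAB : A = 0 ∨ B = 0 := by
    by_contra h
    push_neg at h
    obtain ⟨hA', hB'⟩ := h
    obtain ⟨i, -, hi⟩ := Finset.exists_ne_zero_of_sum_ne_zero hA'
    obtain ⟨j, -, hij⟩ := Finset.exists_ne_zero_of_sum_ne_zero hi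
    obtain ⟨i', -, hi'⟩ := Finset.exists_ne_zero_of_sum_ne_zero hB'
    obtain ⟨j', -, hij'⟩ := Finset.exists_ne_zero_of_sum_ne_zero hi'
    have hp1 : plan f g i j ≠ 0 := fun h => hij (by rw [h, zero_mul])
    have hp2 : plan f g i' j' ≠ 0 := fun h => hij' (by rw [h, zero_mul])
    have hq1 : max 0 (u i - v j) ≠ 0 := fun h => hij (by rw [h, mul_zero])
    have hq2 : max 0 (v j' - u i') ≠ 0 := fun h => hij' (by rw [h, mul_zero])
    have c1 := max_ne_ind (P := x i < t) (Q := y j < t) hq1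
    have c2 := max_ne_ind (P := y j' < t) (Q := x i' < t) hq2
    exact no_cross hf hg hx hy
      (lt_of_le_of_ne (plan_nonneg f g i j) (Ne.symm hp1))
      (lt_of_le_of_ne (plan_nonneg f g i' j') (Ne.symm hp2))
      c1.1 c1.2 c2.1 c2.2
  rw [hS, hD]
  rcases hAB with h | h
  · rw [h, zero_add, zero_sub, abs_neg, abs_of_nonneg hB0]
  · rw [h, add_zero, sub_zero, abs_of_nonneg hA0]

end MKaux

namespace MKaux

lemma sum_e_integrable (x : Fin N → ℝ) (y : Fin M → ℝ) (α : Fin N → Fin M → ℝ) :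
    Integrable (fun t : ℝ => ∑ i, ∑ j, α i j *
      |(if x i < t then (1:ℝ) else 0) - (if y j < t then 1 else 0)|) := by
  have h : (fun t : ℝ => ∑ i, ∑ j, α i j *
      |(if x i < t then (1:ℝ) else 0) - (if y j < t then 1 else 0)|) =
      fun t : ℝ => ∑ p ∈ Finset.univ ×ˢ Finset.univ, α p.1 p.2 *
        |(if x p.1 < t then (1:ℝ) else 0) - (if y p.2 < t then 1 else 0)| := by
    funext t
    rw [Finset.sum_product]
  rw [h]
  exact integrable_finset_sum _ fun p _ => (integrable_ind (x p.1) (y p.2)).const_mul _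

lemma cost_eq_integral (x : Fin N → ℝ) (y : Fin M → ℝ) (α : Fin N → Fin M → ℝ) :
    ∑ i, ∑ j, α i j * |x i - y j| = ∫ t : ℝ, ∑ i, ∑ j, α i j *
      |(if x i < t then (1:ℝ) else 0) - (if y j < t then 1 else 0)| := by
  have h : ∀ t : ℝ, (∑ i, ∑ j, α i j *
      |(if x i < t then (1:ℝ) else 0) - (if y j < t then 1 else 0)|) =
      ∑ p ∈ Finset.univ ×ˢ Finset.univ, α p.1 p.2 *
        |(if x p.1 < t then (1:ℝ) else 0) - (if y p.2 < t then 1 else 0)| := by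
    intro t
    rw [Finset.sum_product]
  simp only [h]
  rw [integral_finset_sum _ fun p _ => (integrable_ind (x p.1) (y p.2)).const_mul _]
  rw [← Finset.sum_product']
  refine Finset.sum_congr rfl fun p _ => ?_
  rw [MeasureTheory.integral_const_mul, integral_ind]

lemma main_sorted (f : Fin N → ℝ) (g : Fin M → ℝ)
    (x : Fin N → ℝ) (y : Fin M → ℝ)
    (hf : ∀ i, 0 ≤ f i) (hg : ∀ j, 0 ≤ g j)
    (hf1 : ∑ i, f i = 1) (hg1 : ∑ j, g j = 1)
    (hx : Monotone x) (hy : Monotone y) :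
    sInf {v : ℝ | ∃ α : Fin N → Fin M → ℝ,
        (∀ i j, 0 ≤ α i j) ∧ (∀ j, ∑ i, α i j = g j) ∧ (∀ i, ∑ j, α i j = f i) ∧
        v = ∑ i, ∑ j, α i j * |x i - y j|} =
    ∫ t : ℝ, |(∑ i, if x i < t then f i else 0) - (∑ j, if y j < t then g j else 0)| := by
  have habs : (fun t : ℝ =>
      |(∑ i, if x i < t then f i else 0) - (∑ j, if y j < t then g j else 0)|) =
      fun t : ℝ => ∑ i, ∑ j, plan f g i j *
        |(if x i < t then (1:ℝ) else 0) - (if y j < t then 1 else 0)| := by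
    funext t
    rw [pointwise_eq hf hg hf1 hg1 hx hy t]
  refine IsLeast.csInf_eq ⟨⟨plan f g, plan_nonneg f g, plan_col f g hf hg hf1 hg1,
    plan_row f g hf hg hf1 hg1, ?_⟩, ?_⟩
  · rw [cost_eq_integral, habs]
  · rintro v ⟨α, hα, hcol, hrow, rfl⟩
    rw [habs, cost_eq_integral x y α]
    refine integral_mono (sum_e_integrable x y (plan f g)) (sum_e_integrable x y α) ?_
    intro t
    dsimp only
    rw [pointwise_eq hf hg hf1 hg1 hx hy t]
    exact pointwise_le x y α hα hcol hrow t

end MKaux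

theorem mk_line_eq_l1_of_cdf (N M : ℕ) (f : Fin N → ℝ) (g : Fin M → ℝ)
    (x : Fin N → ℝ) (y : Fin M → ℝ)
    (hf : ∀ i, 0 ≤ f i) (hg : ∀ j, 0 ≤ g j)
    (hf1 : ∑ i, f i = 1) (hg1 : ∑ j, g j = 1) :
    sInf {v : ℝ | ∃ α : Fin N → Fin M → ℝ,
        (∀ i j, 0 ≤ α i j) ∧ (∀ j, ∑ i, α i j = g j) ∧ (∀ i, ∑ j, α i j = f i) ∧
        v = ∑ i, ∑ j, α i j * |x i - y j|} =
    ∫ t : ℝ, |(∑ i, if x i < t then f i else 0) - (∑ j, if y j < t then g j else 0)| := by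
  classical
  set σ := Tuple.sort x with hσ
  set τ := Tuple.sort y with hτ
  have hx : Monotone (x ∘ σ) := Tuple.monotone_sort x
  have hy : Monotone (y ∘ τ) := Tuple.monotone_sort y
  have hset : {v : ℝ | ∃ α : Fin N → Fin M → ℝ,
        (∀ i j, 0 ≤ α i j) ∧ (∀ j, ∑ i, α i j = g j) ∧ (∀ i, ∑ j, α i j = f i) ∧
        v = ∑ i, ∑ j, α i j * |x i - y j|} =
      {v : ℝ | ∃ α : Fin N → Fin M → ℝ,
        (∀ i j, 0 ≤ α i j) ∧ (∀ j, ∑ i, α i j = (g ∘ τ) j) ∧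
        (∀ i, ∑ j, α i j = (f ∘ σ) i) ∧
        v = ∑ i, ∑ j, α i j * |(x ∘ σ) i - (y ∘ τ) j|} := by
    ext v
    simp only [Set.mem_setOf_eq, Function.comp]
    constructor
    · rintro ⟨α, h0, hc, hr, rfl⟩
      refine ⟨fun i j => α (σ i) (τ j), fun i j => h0 _ _, fun j => ?_, fun i => ?_, ?_⟩
      · rw [Equiv.sum_comp σ (fun i => α i (τ j))]
        exact hc _
      · rw [Equiv.sum_comp τ (fun j => α (σ i) j)]
        exact hr _
      · rw [← Equiv.sum_comp σ (fun i => ∑ j, α i j * |x i - y j|)]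
        exact Finset.sum_congr rfl fun i _ =>
          (Equiv.sum_comp τ (fun j => α (σ i) j * |x (σ i) - y j|)).symm
    · rintro ⟨β, h0, hc, hr, rfl⟩
      refine ⟨fun i j => β (σ.symm i) (τ.symm j), fun i j => h0 _ _, fun j => ?_,
        fun i => ?_, ?_⟩
      · rw [Equiv.sum_comp σ.symm (fun i => β i (τ.symm j))]
        rw [hc (τ.symm j)]
        rw [Equiv.apply_symm_apply]
      · rw [Equiv.sum_comp τ.symm (fun j => β (σ.symm i) j)]
        rw [hr (σ.symm i)]
        rw [Equiv.apply_symm_apply]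
      · rw [← Equiv.sum_comp σ
          (fun i => ∑ j, β (σ.symm i) (τ.symm j) * |x i - y j|)]
        refine Finset.sum_congr rfl fun i _ => ?_
        rw [← Equiv.sum_comp τ
          (fun j => β (σ.symm (σ i)) (τ.symm j) * |x (σ i) - y j|)]
        refine Finset.sum_congr rfl fun j _ => ?_
        rw [Equiv.symm_apply_apply, Equiv.symm_apply_apply]
  rw [hset, MKaux.main_sorted (f ∘ σ) (g ∘ τ) (x ∘ σ) (y ∘ τ)
    (fun i => hf _) (fun j => hg _)
    (by simpa using (Equiv.sum_comp σ f).trans hf1)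
    (by simpa using (Equiv.sum_comp τ g).trans hg1) hx hy]
  refine integral_congr_ae (Filter.Eventually.of_forall fun t => ?_)
  dsimp only [Function.comp]
  rw [Equiv.sum_comp σ (fun i => if x i < t then f i else 0),
    Equiv.sum_comp τ (fun j => if y j < t then g j else 0)]
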